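/- Let N be a finite nonempty set of clients with n = |N|, where each client i ∈ N owns a finite nonempty set D_i of data blocks, the sets D_i are pairwise disjoint, and D = ⋃_{i∈N} D_i; for C ⊆ N write D_C = ⋃_{i'∈C} D_{i'}, and set w_m(k) = k!·(m−k−1)!/m!. For a utility metric v : 2^D → ℝ with v(∅) = 0 and a client i, define the induced utility v^{(i)} : 2^{D_i} → ℝ by v^{(i)}(S) = Σ_{C ⊆ N∖{i}} w_n(|C|)·(v(D_C ∪ S) − v(D_C)). Suppose φ assigns to every such utility metric v, every client i ∈ N, and every block j ∈ D_i a real number φ_{i,j}(v), and write φ_i(v) = Σ_{j∈D_i} φ_{i,j}(v). Suppose φ satisfies: (LIN) for each i, j, the map v ↦ φ_{i,j}(v) is ℝ-linear; (EFF) Σ_{i∈N} Σ_{j∈D_i} φ_{i,j}(v) = v(D) for every v; (DUM-C) if v(D_C ∪ D_i) − v(D_C) = v(D_i) for all C ⊆ N∖{i}, then φ_i(v) = v(D_i); (SYM-C) if v(D_C ∪ D_{i₁}) = v(D_C ∪ D_{i₂}) for all C ⊆ N∖{i₁,i₂}, then φ_{i₁}(v) = φ_{i₂}(v); (DUM-IB)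 if v^{(i)}(S ∪ {j}) − v^{(i)}(S) = v^{(i)}({j}) for all S ⊆ D_i∖{j}, then φ_{i,j}(v) = v^{(i)}({j}); (SYM-IB) if v^{(i)}(S ∪ {j₁}) = v^{(i)}(S ∪ {j₂}) for all S ⊆ D_i∖{j₁,j₂}, then φ_{i,j₁}(v) = φ_{i,j₂}(v). Then φ coincides with Truth-Shapley: φ_{i,j}(v) = φ^TSV_{i,j}(v) := Σ_{S ⊆ D_i∖{j}} w_{|D_i|}(|S|)·(v^{(i)}(S ∪ {j}) − v^{(i)}(S)) for every v, i, and j. -/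

import Mathlib

open Finset

/-- Shapley weight `w_m(k) = k! (m-k-1)! / m!`. -/
noncomputable def w (m k : ℕ) : ℝ :=
  (Nat.factorial k : ℝ) * (Nat.factorial (m - k - 1) : ℝ) / (Nat.factorial m : ℝ)

/-- The induced utility `v^{(i)}(S) = ∑_{C ⊆ N∖{i}} w_n(|C|)·(v(D_C ∪ S) − v(D_C))`,
where `D_C = ⋃_{i'∈C} D_{i'}`. -/
noncomputable def vInd {α : Type*} [DecidableEq α] {ι : Type*} [Fintype ι] [DecidableEq ι]
    (Dset : ι → Finset α) (v : Finset α → ℝ) (i : ι) (S : Finset α) : ℝ :=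
  ∑ C ∈ (Finset.univ.erase i).powerset,
    w (Fintype.card ι) C.card * (v (C.biUnion Dset ∪ S) - v (C.biUnion Dset))

/-- The client-level Truth-Shapley value
`φ^TSV_i(v) = ∑_{C ⊆ N∖{i}} w_n(|C|)·(v(D_{C∪{i}}) − v(D_C))`. -/
noncomputable def tsvClient {α : Type*} [DecidableEq α] {ι : Type*} [Fintype ι] [DecidableEq ι]
    (Dset : ι → Finset α) (v : Finset α → ℝ) (i : ι) : ℝ :=
  ∑ C ∈ (Finset.univ.erase i).powerset,
    w (Fintype.card ι) C.card * (v ((insert i C).biUnion Dset) - v (C.biUnion Dset))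

/-- The block-level Truth-Shapley value
`φ^TSV_{i,j}(v) = ∑_{S ⊆ D_i∖{j}} w_{|D_i|}(|S|)·(v^{(i)}(S ∪ {j}) − v^{(i)}(S))`. -/
noncomputable def tsvBlock {α : Type*} [DecidableEq α] {ι : Type*} [Fintype ι] [DecidableEq ι]
    (Dset : ι → Finset α) (v : Finset α → ℝ) (i : ι) (j : α) : ℝ :=
  ∑ S ∈ ((Dset i).erase j).powerset,
    w (Dset i).card S.card * (vInd Dset v i (insert j S) - vInd Dset v i S)

/-! ### Auxiliary lemmas for the uniqueness proof -/

lemma tsNatKey (f b : ℕ) :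
    ∑ k ∈ range (f+1), f.choose k * ((k+b).factorial * (f-k).factorial)
      = f.factorial * b.factorial * (f+b+1).choose (b+1) := by
  have h : ∀ k ∈ range (f+1), f.choose k * ((k+b).factorial * (f-k).factorial)
      = f.factorial * b.factorial * ((k+b).choose b) := by
    intro k hk
    have hk' : k ≤ f := by have := mem_range.mp hk; omega
    have h1 := Nat.choose_mul_factorial_mul_factorial hk'
    have h2 := Nat.choose_mul_factorial_mul_factorial (Nat.le_add_left b k)
    rw [Nat.add_sub_cancel] at h2
    calc f.choose k * ((k+b).factorial * (f-k).factorial)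
        = f.choose k * (((k+b).choose b * b.factorial * k.factorial) * (f-k).factorial) := by
          rw [h2]
      _ = (f.choose k * k.factorial * (f-k).factorial) * ((k+b).choose b * b.factorial) := by
          ring
      _ = f.factorial * b.factorial * (k+b).choose b := by rw [h1]; ring
  rw [Finset.sum_congr rfl h, ← Finset.mul_sum]
  congr 1
  rw [← Nat.sum_Icc_choose (f+b) b]
  apply Finset.sum_nbij' (i := fun k => k + b) (j := fun m => m - b)
  · intro k hk; have := mem_range.mp hk; rw [mem_Icc]; omega
  · intro m hm; rw [mem_Icc] at hm; rw [mem_range]; omega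
  · intro k hk; omega
  · intro m hm; rw [mem_Icc] at hm; omega
  · intro k hk; rfl

lemma tsSumW (f b : ℕ) :
    ∑ k ∈ range (f+1), (f.choose k : ℝ) * w (f+b+1) (k+b) = ((b:ℝ)+1)⁻¹ := by
  have h : ∀ k ∈ range (f+1), (f.choose k : ℝ) * w (f+b+1) (k+b)
      = ((f.choose k * ((k+b).factorial * (f-k).factorial) : ℕ) : ℝ)
          / ((f+b+1).factorial : ℝ) := by
    intro k hk
    have hk' : k ≤ f := by have := mem_range.mp hk; omega
    have h3 : f + b + 1 - (k+b) - 1 = f - k := by omega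
    rw [w, h3]
    push_cast
    ring
  rw [Finset.sum_congr rfl h, ← Finset.sum_div, ← Nat.cast_sum, tsNatKey]
  have hkey := Nat.choose_mul_factorial_mul_factorial (show b+1 ≤ f+b+1 by omega)
  have h4 : f + b + 1 - (b+1) = f := by omega
  rw [h4] at hkey
  have hnat : f.factorial * b.factorial * ((f+b+1).choose (b+1)) * (b+1)
      = (f+b+1).factorial := by
    rw [← hkey, Nat.factorial_succ]
    ring
  have hm : (((f+b+1).factorial : ℕ) : ℝ) ≠ 0 := Nat.cast_ne_zero.mpr (Nat.factorial_ne_zero _)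
  have hb1 : ((b:ℝ)+1) ≠ 0 := by positivity
  rw [div_eq_iff hm, eq_comm, inv_mul_eq_div, div_eq_iff hb1, ← hnat]
  push_cast
  ring

lemma tsSumPowersetFilter {β : Type*} [DecidableEq β] (B G : Finset β)
    (hBG : B ⊆ G) (f : ℕ → ℝ) :
    ∑ C ∈ G.powerset.filter (fun C => B ⊆ C), f C.card
      = ∑ E ∈ (G \ B).powerset, f (E.card + B.card) := by
  apply Finset.sum_nbij' (i := fun C => C \ B) (j := fun E => E ∪ B)
  · intro C hC
    rw [mem_filter, mem_powerset] at hC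
    exact mem_powerset.mpr (sdiff_subset_sdiff hC.1 Subset.rfl)
  · intro E hE
    rw [mem_powerset] at hE
    rw [mem_filter, mem_powerset]
    exact ⟨union_subset (hE.trans sdiff_subset) hBG, subset_union_right⟩
  · intro C hC
    rw [mem_filter] at hC
    exact sdiff_union_of_subset hC.2
  · intro E hE
    rw [mem_powerset] at hE
    exact union_sdiff_cancel_right (disjoint_of_subset_left hE sdiff_disjoint)
  · intro C hC
    rw [mem_filter] at hC
    rw [card_sdiff_add_card_eq_card hC.2]

lemma tsSumWFilter {β : Type*} [DecidableEq β] (B G : Finset β) (hBG : B ⊆ G) :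
    ∑ C ∈ G.powerset.filter (fun C => B ⊆ C), w (G.card + 1) C.card
      = ((B.card : ℝ) + 1)⁻¹ := by
  rw [tsSumPowersetFilter B G hBG]
  rw [Finset.sum_powerset_apply_card (fun m => w (G.card+1) (m + B.card))]
  have hc : (G \ B).card = G.card - B.card := card_sdiff_of_subset hBG
  have hle := card_le_card hBG
  have hm : G.card + 1 = (G\B).card + B.card + 1 := by omega
  rw [hm, ← tsSumW (G\B).card B.card]
  apply sum_congr rfl
  intro k _
  rw [nsmul_eq_mul]

lemma tsAlt {α : Type*} [DecidableEq α] (A : Finset α) :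
    ∑ E ∈ A.powerset, (-1:ℝ)^E.card = if A = ∅ then 1 else 0 := by
  have h := Finset.sum_powerset_neg_one_pow_card (x := A)
  have h2 : ((∑ m ∈ A.powerset, (-1:ℤ)^m.card : ℤ) : ℝ) = ∑ E ∈ A.powerset, (-1:ℝ)^E.card := by
    push_cast; rfl
  rw [← h2, h]
  split <;> simp

lemma tsMobius {α : Type*} [DecidableEq α] (v : Finset α → ℝ) (A : Finset α) :
    ∑ R ∈ A.powerset, ∑ E ∈ R.powerset, (-1:ℝ)^(R.card - E.card) * v E = v A := by
  rw [Finset.sum_comm' (s := A.powerset) (t := fun R => R.powerset)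
      (s' := fun E => A.powerset.filter (fun R => E ⊆ R)) (t' := A.powerset)
      (by
        intro R E
        simp only [mem_powerset, mem_filter]
        constructor
        · rintro ⟨h1, h2⟩; exact ⟨⟨h1, h2⟩, h2.trans h1⟩
        · rintro ⟨⟨h1, h2⟩, _⟩; exact ⟨h1, h2⟩)]
  have key : ∀ E ∈ A.powerset,
      (∑ R ∈ A.powerset.filter (fun R => E ⊆ R), (-1:ℝ)^(R.card - E.card) * v E)
        = (if E = A then 1 else 0) * v E := by
    intro E hE
    rw [← Finset.sum_mul]
    congr 1
    rw [tsSumPowersetFilter E A (mem_powerset.mp hE) (fun m => (-1:ℝ)^(m - E.card))]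
    have h : ∀ F ∈ (A\E).powerset, (-1:ℝ)^((F.card + E.card) - E.card) = (-1:ℝ)^F.card := by
      intro F _; congr 1; omega
    rw [sum_congr rfl h, tsAlt]
    by_cases hEA : E = A
    · rw [if_pos hEA, if_pos (by simp [hEA])]
    · rw [if_neg hEA, if_neg (fun hAE => hEA (subset_antisymm (mem_powerset.mp hE)
        (sdiff_eq_empty_iff_subset.mp hAE)))]
  rw [sum_congr rfl key]
  rw [Finset.sum_eq_single_of_mem A (mem_powerset_self A)]
  · rw [if_pos rfl, one_mul]
  · intro E _ hEA
    rw [if_neg hEA, zero_mul]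

/-- The unanimity game on a set of blocks. -/
noncomputable def uG {α : Type*} [DecidableEq α] (R : Finset α) : Finset α → ℝ :=
  fun T => if R ⊆ T then 1 else 0

lemma tsMemClient {α : Type*} [DecidableEq α] {ι : Type*} (Dset : ι → Finset α)
    (hdisj : ∀ i j : ι, i ≠ j → Disjoint (Dset i) (Dset j))
    {x : α} {i i' : ι} (hx : x ∈ Dset i) (hx' : x ∈ Dset i') : i = i' := by
  by_contra h
  exact Finset.disjoint_left.mp (hdisj i i' h) hx hx'

lemma tsF1 {α : Type*} [DecidableEq α] {ι : Type*} [Fintype ι] [DecidableEq ι]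
    (Dset : ι → Finset α)
    (hdisj : ∀ i j : ι, i ≠ j → Disjoint (Dset i) (Dset j))
    {R : Finset α} (hRD : R ⊆ Finset.univ.biUnion Dset) (C : Finset ι) :
    R ⊆ C.biUnion Dset ↔ (univ.filter fun i' => (R ∩ Dset i').Nonempty) ⊆ C := by
  constructor
  · intro h i' hi'
    obtain ⟨x, hx⟩ := (mem_filter.mp hi').2
    rw [mem_inter] at hx
    obtain ⟨i'', hi'', hx''⟩ := mem_biUnion.mp (h hx.1)
    rwa [tsMemClient Dset hdisj hx'' hx.2] at hi''
  · intro h x hx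
    obtain ⟨i', -, hx'⟩ := mem_biUnion.mp (hRD hx)
    exact mem_biUnion.mpr ⟨i', h (mem_filter.mpr ⟨mem_univ _, ⟨x, mem_inter.mpr ⟨hx, hx'⟩⟩⟩), hx'⟩

lemma tsF2 {α : Type*} [DecidableEq α] {ι : Type*} [Fintype ι] [DecidableEq ι]
    (Dset : ι → Finset α)
    (hdisj : ∀ i j : ι, i ≠ j → Disjoint (Dset i) (Dset j))
    {R : Finset α} (hRD : R ⊆ Finset.univ.biUnion Dset) {i : ι} {S : Finset α}
    (hS : S ⊆ Dset i) {C : Finset ι} (hiC : i ∉ C) :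
    R ⊆ C.biUnion Dset ∪ S ↔
      ((univ.filter fun i' => (R ∩ Dset i').Nonempty).erase i ⊆ C ∧ R ∩ Dset i ⊆ S) := by
  constructor
  · intro h
    refine ⟨?_, ?_⟩
    · intro i' hi'
      have hne := (mem_erase.mp hi').1
      obtain ⟨x, hx⟩ := (mem_filter.mp (mem_erase.mp hi').2).2
      rw [mem_inter] at hx
      rcases mem_union.mp (h hx.1) with hxc | hxs
      · obtain ⟨i'', hi'', hx''⟩ := mem_biUnion.mp hxc
        rwa [tsMemClient Dset hdisj hx'' hx.2] at hi''
      · exact absurd (tsMemClient Dset hdisj (hS hxs) hx.2) (Ne.symm hne)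
    · intro x hx
      rw [mem_inter] at hx
      rcases mem_union.mp (h hx.1) with hxc | hxs
      · obtain ⟨i'', hi'', hx''⟩ := mem_biUnion.mp hxc
        have he : i'' = i := tsMemClient Dset hdisj hx'' hx.2
        exact absurd (he ▸ hi'') hiC
      · exact hxs
  · rintro ⟨h1, h2⟩ x hx
    obtain ⟨i', -, hx'⟩ := mem_biUnion.mp (hRD hx)
    by_cases hii : i' = i
    · subst hii
      exact mem_union.mpr (Or.inr (h2 (mem_inter.mpr ⟨hx, hx'⟩)))
    · refine mem_union.mpr (Or.inl (mem_biUnion.mpr ⟨i', h1 ?_, hx'⟩))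
      exact mem_erase.mpr ⟨hii, mem_filter.mpr ⟨mem_univ _, ⟨x, mem_inter.mpr ⟨hx, hx'⟩⟩⟩⟩

lemma tsVIndUG {α : Type*} [DecidableEq α] {ι : Type*} [Fintype ι] [DecidableEq ι]
    [Nonempty ι] (Dset : ι → Finset α)
    (hdisj : ∀ i j : ι, i ≠ j → Disjoint (Dset i) (Dset j))
    {R : Finset α} (hRD : R ⊆ Finset.univ.biUnion Dset)
    (i : ι) {S : Finset α} (hS : S ⊆ Dset i) :
    vInd Dset (uG R) i S =
      if (R ∩ Dset i).Nonempty ∧ R ∩ Dset i ⊆ S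
      then (((univ.filter fun i' => (R ∩ Dset i').Nonempty).card : ℝ))⁻¹ else 0 := by
  have hiC : ∀ C ∈ (univ.erase i).powerset, i ∉ C := fun C hC h =>
    (mem_erase.mp (mem_powerset.mp hC h)).1 rfl
  by_cases hiT : (R ∩ Dset i).Nonempty
  · have hiT' : i ∈ univ.filter fun i' => (R ∩ Dset i').Nonempty :=
      mem_filter.mpr ⟨mem_univ _, hiT⟩
    have hterm : ∀ C ∈ (univ.erase i).powerset,
        w (Fintype.card ι) C.card * (uG R (C.biUnion Dset ∪ S) - uG R (C.biUnion Dset))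
          = if (univ.filter fun i' => (R ∩ Dset i').Nonempty).erase i ⊆ C
            then w (Fintype.card ι) C.card * (if R ∩ Dset i ⊆ S then 1 else 0) else 0 := by
      intro C hC
      have h0 : uG R (C.biUnion Dset) = 0 := by
        simp only [uG]
        rw [if_neg]
        rw [tsF1 Dset hdisj hRD]
        exact fun h => hiC C hC (h hiT')
      rw [h0, sub_zero]
      simp only [uG]
      by_cases h1 : (univ.filter fun i' => (R ∩ Dset i').Nonempty).erase i ⊆ C
      · rw [if_pos h1]
        by_cases h2 : R ∩ Dset i ⊆ S
        · rw [if_pos ((tsF2 Dset hdisj hRD hS (hiC C hC)).mpr ⟨h1, h2⟩), if_pos h2]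
        · rw [if_neg (fun h => h2 ((tsF2 Dset hdisj hRD hS (hiC C hC)).mp h).2), if_neg h2]
      · rw [if_neg h1, if_neg (fun h => h1 ((tsF2 Dset hdisj hRD hS (hiC C hC)).mp h).1), mul_zero]
    rw [vInd, sum_congr rfl hterm, ← Finset.sum_filter]
    by_cases h2 : R ∩ Dset i ⊆ S
    · rw [if_pos (show (R ∩ Dset i).Nonempty ∧ R ∩ Dset i ⊆ S from ⟨hiT, h2⟩)]
      simp only [if_pos h2, mul_one]
      have hG : Fintype.card ι = (univ.erase i).card + 1 := by
        rw [card_erase_of_mem (mem_univ i), card_univ]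
        have := Fintype.card_pos (α := ι); omega
      rw [hG, tsSumWFilter _ _ (erase_subset_erase _ (subset_univ _))]
      rw [card_erase_of_mem hiT']
      have ht : 1 ≤ (univ.filter fun i' => (R ∩ Dset i').Nonempty).card :=
        card_pos.mpr ⟨i, hiT'⟩
      rw [Nat.cast_sub ht]
      norm_num
    · rw [if_neg (show ¬((R ∩ Dset i).Nonempty ∧ R ∩ Dset i ⊆ S) from fun h => h2 h.2)]
      simp only [if_neg h2, mul_zero]
      simp
  · rw [if_neg (fun h => hiT h.1), vInd]
    apply Finset.sum_eq_zero
    intro C hC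
    have hR0 : R ∩ Dset i = ∅ := not_nonempty_iff_eq_empty.mp hiT
    have hTT : (univ.filter fun i' => (R ∩ Dset i').Nonempty).erase i
        = univ.filter fun i' => (R ∩ Dset i').Nonempty :=
      erase_eq_of_notMem (fun h => hiT (mem_filter.mp h).2)
    have e1 := tsF2 Dset hdisj hRD hS (hiC C hC)
    have e2 := tsF1 Dset hdisj hRD C
    rw [hTT, hR0] at e1
    simp only [empty_subset, and_true] at e1
    have hL : uG R (C.biUnion Dset ∪ S) = uG R (C.biUnion Dset) := by
      simp only [uG]
      exact if_congr (e1.trans e2.symm) rfl rfl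
    rw [hL, sub_self, mul_zero]

lemma tsTsvUG {α : Type*} [DecidableEq α] {ι : Type*} [Fintype ι] [DecidableEq ι]
    [Nonempty ι] (Dset : ι → Finset α)
    (hdisj : ∀ i j : ι, i ≠ j → Disjoint (Dset i) (Dset j))
    {R : Finset α} (hRD : R ⊆ Finset.univ.biUnion Dset)
    (i : ι) {j : α} (hj : j ∈ Dset i) :
    tsvBlock Dset (uG R) i j =
      if (R ∩ Dset i).Nonempty ∧ j ∈ R
      then (((univ.filter fun i' => (R ∩ Dset i').Nonempty).card : ℝ))⁻¹
             * ((R ∩ Dset i).card : ℝ)⁻¹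
      else 0 := by
  rw [tsvBlock]
  by_cases hiT : (R ∩ Dset i).Nonempty
  · by_cases hjR : j ∈ R
    · have hjRi : j ∈ R ∩ Dset i := mem_inter.mpr ⟨hjR, hj⟩
      rw [if_pos ⟨hiT, hjR⟩]
      have hterm : ∀ S ∈ ((Dset i).erase j).powerset,
          w (Dset i).card S.card * (vInd Dset (uG R) i (insert j S) - vInd Dset (uG R) i S)
          = if (R ∩ Dset i).erase j ⊆ S
            then w (Dset i).card S.card
              * (((univ.filter fun i' => (R ∩ Dset i').Nonempty).card : ℝ))⁻¹ else 0 := by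
        intro S hS
        have hSsub := mem_powerset.mp hS
        have hS' : S ⊆ Dset i := hSsub.trans (erase_subset _ _)
        have hjS : j ∉ S := fun h => (mem_erase.mp (hSsub h)).1 rfl
        rw [tsVIndUG Dset hdisj hRD i (insert_subset hj hS'),
            tsVIndUG Dset hdisj hRD i hS']
        rw [if_neg (show ¬((R ∩ Dset i).Nonempty ∧ R ∩ Dset i ⊆ S) from
          fun h => hjS (h.2 hjRi)), sub_zero]
        by_cases h1 : (R ∩ Dset i).erase j ⊆ S
        · rw [if_pos ⟨hiT, Finset.subset_insert_iff.mpr h1⟩, if_pos h1]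
        · rw [if_neg (fun h => h1 (Finset.subset_insert_iff.mp h.2)), if_neg h1, mul_zero]
      rw [sum_congr rfl hterm, ← Finset.sum_filter, ← Finset.sum_mul]
      have hG : (Dset i).card = ((Dset i).erase j).card + 1 := by
        rw [card_erase_of_mem hj]
        have := card_pos.mpr ⟨j, hj⟩; omega
      rw [hG, tsSumWFilter _ _ (erase_subset_erase _ inter_subset_right)]
      rw [card_erase_of_mem hjRi]
      have hr : 1 ≤ (R ∩ Dset i).card := card_pos.mpr hiT
      rw [Nat.cast_sub hr]
      push_cast
      rw [sub_add_cancel]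
      ring
    · rw [if_neg (fun h => hjR h.2)]
      apply sum_eq_zero
      intro S hS
      have hSsub := mem_powerset.mp hS
      have hS' : S ⊆ Dset i := hSsub.trans (erase_subset _ _)
      have hjRi : j ∉ R ∩ Dset i := fun h => hjR (mem_inter.mp h).1
      rw [tsVIndUG Dset hdisj hRD i (insert_subset hj hS'),
          tsVIndUG Dset hdisj hRD i hS']
      have hiff : R ∩ Dset i ⊆ insert j S ↔ R ∩ Dset i ⊆ S := by
        rw [Finset.subset_insert_iff, erase_eq_of_notMem hjRi]
      rw [if_congr (and_congr_right fun _ => hiff) rfl rfl, sub_self, mul_zero]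
  · rw [if_neg (fun h => hiT h.1)]
    apply sum_eq_zero
    intro S hS
    have hS' : S ⊆ Dset i := (mem_powerset.mp hS).trans (erase_subset _ _)
    rw [tsVIndUG Dset hdisj hRD i (insert_subset hj hS'),
        tsVIndUG Dset hdisj hRD i hS']
    rw [if_neg (fun h => hiT h.1), if_neg (fun h => hiT h.1), sub_self, mul_zero]

lemma tsVIndComb {α : Type*} [DecidableEq α] {ι : Type*} [Fintype ι] [DecidableEq ι]
    (Dset : ι → Finset α) (a b : ℝ) (v₁ v₂ : Finset α → ℝ) (i : ι) (S : Finset α) :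
    vInd Dset (a • v₁ + b • v₂) i S = a * vInd Dset v₁ i S + b * vInd Dset v₂ i S := by
  simp only [vInd, Pi.add_apply, Pi.smul_apply, smul_eq_mul, Finset.mul_sum]
  rw [← Finset.sum_add_distrib]
  apply sum_congr rfl
  intro C _
  ring

lemma tsTsvComb {α : Type*} [DecidableEq α] {ι : Type*} [Fintype ι] [DecidableEq ι]
    (Dset : ι → Finset α) (a b : ℝ) (v₁ v₂ : Finset α → ℝ) (i : ι) (j : α) :
    tsvBlock Dset (a • v₁ + b • v₂) i j
      = a * tsvBlock Dset v₁ i j + b * tsvBlock Dset v₂ i j := by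
  simp only [tsvBlock, tsVIndComb, Finset.mul_sum]
  rw [← Finset.sum_add_distrib]
  apply sum_congr rfl
  intro S _
  ring

lemma tsLinSum {α : Type*} {γ : Type*} (F : (Finset α → ℝ) → ℝ)
    (hF : ∀ (a b : ℝ) (v₁ v₂ : Finset α → ℝ), v₁ ∅ = 0 → v₂ ∅ = 0 →
      F (a • v₁ + b • v₂) = a * F v₁ + b * F v₂)
    (s : Finset γ) (c : γ → ℝ) (g : γ → Finset α → ℝ) (hg : ∀ x ∈ s, g x ∅ = 0) :
    F (∑ x ∈ s, c x • g x) = ∑ x ∈ s, c x * F (g x) := by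
  classical
  induction s using Finset.induction_on with
  | empty =>
    have h0 := hF 0 0 0 0 rfl rfl
    simp only [zero_smul, add_zero, zero_mul] at h0
    simpa using h0
  | @insert x s hx ih =>
    have hg' : ∀ y ∈ s, g y ∅ = 0 := fun y hy => hg y (mem_insert_of_mem hy)
    have hsum0 : (∑ y ∈ s, c y • g y) ∅ = 0 := by
      rw [Finset.sum_apply]
      exact Finset.sum_eq_zero fun y hy => by simp [hg' y hy]
    rw [Finset.sum_insert hx, Finset.sum_insert hx]
    have h := hF (c x) 1 (g x) (∑ y ∈ s, c y • g y) (hg x (mem_insert_self x s)) hsum0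
    rw [one_smul, one_mul] at h
    rw [h, ih hg']
/-- Theorem 4.6 (uniqueness of Truth-Shapley): any data valuation metric `φ`
satisfying LIN, EFF, DUM-C, SYM-C, DUM-IB and SYM-IB coincides with
Truth-Shapley on all utility metrics with `v ∅ = 0`. -/
theorem truth_shapley_unique {α : Type*} [DecidableEq α]
    {ι : Type*} [Fintype ι] [DecidableEq ι] [Nonempty ι]
    (Dset : ι → Finset α) (hne : ∀ i, (Dset i).Nonempty)
    (hdisj : ∀ i j : ι, i ≠ j → Disjoint (Dset i) (Dset j))
    (D : Finset α) (hD : D = Finset.univ.biUnion Dset)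
    (φ : (Finset α → ℝ) → ι → α → ℝ)
    (hLIN : ∀ (i : ι), ∀ j ∈ Dset i, ∀ (a b : ℝ) (v₁ v₂ : Finset α → ℝ),
      v₁ ∅ = 0 → v₂ ∅ = 0 →
      φ (a • v₁ + b • v₂) i j = a * φ v₁ i j + b * φ v₂ i j)
    (hEFF : ∀ v : Finset α → ℝ, v ∅ = 0 →
      ∑ i : ι, ∑ j ∈ Dset i, φ v i j = v D)
    (hDUMC : ∀ v : Finset α → ℝ, v ∅ = 0 → ∀ i : ι,
      (∀ C : Finset ι, i ∉ C →
        v (C.biUnion Dset ∪ Dset i) - v (C.biUnion Dset) = v (Dset i)) →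
      ∑ j ∈ Dset i, φ v i j = v (Dset i))
    (hSYMC : ∀ v : Finset α → ℝ, v ∅ = 0 → ∀ i₁ i₂ : ι,
      (∀ C : Finset ι, i₁ ∉ C → i₂ ∉ C →
        v (C.biUnion Dset ∪ Dset i₁) = v (C.biUnion Dset ∪ Dset i₂)) →
      ∑ j ∈ Dset i₁, φ v i₁ j = ∑ j ∈ Dset i₂, φ v i₂ j)
    (hDUMIB : ∀ v : Finset α → ℝ, v ∅ = 0 → ∀ i : ι, ∀ j ∈ Dset i,
      (∀ S ⊆ (Dset i).erase j,
        vInd Dset v i (insert j S) - vInd Dset v i S = vInd Dset v i {j}) →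
      φ v i j = vInd Dset v i {j})
    (hSYMIB : ∀ v : Finset α → ℝ, v ∅ = 0 → ∀ i : ι, ∀ j₁ ∈ Dset i, ∀ j₂ ∈ Dset i,
      (∀ S ⊆ ((Dset i).erase j₁).erase j₂,
        vInd Dset v i (insert j₁ S) = vInd Dset v i (insert j₂ S)) →
      φ v i j₁ = φ v i j₂) :
    ∀ v : Finset α → ℝ, v ∅ = 0 → ∀ i : ι, ∀ j ∈ Dset i,
      φ v i j = tsvBlock Dset v i j := by
  intro v hv i j hj
  classical
  have hDsub : ∀ i', Dset i' ⊆ D := by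
    intro i'; rw [hD]; exact subset_biUnion_of_mem Dset (mem_univ i')
  set c : Finset α → ℝ := fun R => ∑ E ∈ R.powerset, (-1:ℝ)^(R.card - E.card) * v E with hc
  set 𝒮 : Finset (Finset α) := D.powerset.erase ∅ with h𝒮
  have hmem𝒮 : ∀ R ∈ 𝒮, R ≠ ∅ ∧ R ⊆ D := by
    intro R hR
    rw [h𝒮, mem_erase, mem_powerset] at hR
    exact hR
  have huG0 : ∀ R ∈ 𝒮, uG R ∅ = 0 := by
    intro R hR
    simp only [uG]
    rw [if_neg (fun h => (hmem𝒮 R hR).1 (subset_empty.mp h))]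
  set vD : Finset α → ℝ := ∑ R ∈ 𝒮, c R • uG R with hvDdef
  have hvD : ∀ A, vD A = v (A ∩ D) := by
    intro A
    rw [hvDdef, Finset.sum_apply]
    have step1 : ∀ R ∈ 𝒮, (c R • uG R) A = if R ⊆ A ∩ D then c R else 0 := by
      intro R hR
      simp only [Pi.smul_apply, smul_eq_mul, uG]
      by_cases h : R ⊆ A ∩ D
      · rw [if_pos (h.trans inter_subset_left), if_pos h, mul_one]
      · rw [if_neg (fun hA => h (subset_inter hA (hmem𝒮 R hR).2)), if_neg h, mul_zero]
    rw [sum_congr rfl step1]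
    have hins : D.powerset = insert ∅ 𝒮 := by
      rw [h𝒮, insert_erase (mem_powerset.mpr (empty_subset D))]
    have h2 : ∑ R ∈ 𝒮, (if R ⊆ A ∩ D then c R else 0)
        = ∑ R ∈ D.powerset, (if R ⊆ A ∩ D then c R else 0) := by
      rw [hins, Finset.sum_insert (notMem_erase _ _)]
      rw [if_pos (empty_subset _)]
      have hcE : c ∅ = 0 := by
        simp [hc, hv]
      rw [hcE, zero_add]
    rw [h2, ← Finset.sum_filter]
    have hfil : D.powerset.filter (fun R => R ⊆ A ∩ D) = (A ∩ D).powerset := by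
      ext R
      simp only [mem_filter, mem_powerset]
      exact ⟨fun h => h.2, fun h => ⟨h.trans inter_subset_right, h⟩⟩
    rw [hfil]
    simp only [hc]
    exact tsMobius v (A ∩ D)
  set vrest : Finset α → ℝ := fun A => v A - vD A with hvrest
  have hvrest0 : ∀ A, A ⊆ D → vrest A = 0 := by
    intro A hA
    simp only [hvrest]
    rw [hvD, inter_eq_left.mpr hA, sub_self]
  have hvrestE : vrest ∅ = 0 := hvrest0 ∅ (empty_subset D)
  have hvDE : vD ∅ = 0 := by
    rw [hvD]
    simpa [empty_inter] using hv
  have hveq : v = vD + vrest := by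
    funext A
    simp [hvrest]
  have hRD' : ∀ R ∈ 𝒮, R ⊆ Finset.univ.biUnion Dset := by
    intro R hR
    rw [← hD]
    exact (hmem𝒮 R hR).2
  -- vInd of vrest vanishes on subsets of Dset i
  have hvIndrest : ∀ i' : ι, ∀ S, S ⊆ Dset i' → vInd Dset vrest i' S = 0 := by
    intro i' S hSsub
    rw [vInd]
    apply sum_eq_zero
    intro C _
    have hCD : C.biUnion Dset ⊆ D := by
      rw [hD]
      exact biUnion_subset_biUnion_of_subset_left Dset (subset_univ C)
    rw [hvrest0 _ (union_subset hCD (hSsub.trans (hDsub i'))), hvrest0 _ hCD, sub_self, mul_zero]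
  have hφrest : φ vrest i j = 0 := by
    have h := hDUMIB vrest hvrestE i j hj (by
      intro S hSs
      have hs1 : S ⊆ Dset i := hSs.trans (erase_subset _ _)
      rw [hvIndrest i _ hs1, hvIndrest i _ (insert_subset hj hs1),
        hvIndrest i _ (singleton_subset_iff.mpr hj), sub_self])
    rw [h, hvIndrest i _ (singleton_subset_iff.mpr hj)]
  have htsvrest : tsvBlock Dset vrest i j = 0 := by
    rw [tsvBlock]
    apply sum_eq_zero
    intro S hSs
    have hs1 : S ⊆ Dset i := (mem_powerset.mp hSs).trans (erase_subset _ _)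
    rw [hvIndrest i _ hs1, hvIndrest i _ (insert_subset hj hs1), sub_self, mul_zero]
  -- the key computation on unanimity games
  have key : ∀ R ∈ 𝒮, φ (uG R) i j = tsvBlock Dset (uG R) i j := by
    intro R hR
    have hRne : R ≠ ∅ := (hmem𝒮 R hR).1
    have hRD : R ⊆ Finset.univ.biUnion Dset := hRD' R hR
    have hRDD : R ⊆ D := (hmem𝒮 R hR).2
    have huGE : uG R ∅ = 0 := huG0 R hR
    have hTne : (univ.filter fun i' => (R ∩ Dset i').Nonempty).Nonempty := by
      obtain ⟨x, hx⟩ := nonempty_iff_ne_empty.mpr hRne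
      obtain ⟨i', -, hx'⟩ := mem_biUnion.mp (hRD hx)
      exact ⟨i', mem_filter.mpr ⟨mem_univ _, ⟨x, mem_inter.mpr ⟨hx, hx'⟩⟩⟩⟩
    -- zero blocks
    have hzero : ∀ i' : ι, ∀ j' ∈ Dset i', ¬((R ∩ Dset i').Nonempty ∧ j' ∈ R) →
        φ (uG R) i' j' = 0 := by
      intro i' j' hj' hcond
      have h := hDUMIB (uG R) huGE i' j' hj' (by
        intro S hSs
        have hs1 : S ⊆ Dset i' := hSs.trans (erase_subset _ _)
        have hjS : j' ∉ S := fun h => (mem_erase.mp (hSs h)).1 rfl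
        rw [tsVIndUG Dset hdisj hRD i' (insert_subset hj' hs1),
            tsVIndUG Dset hdisj hRD i' hs1,
            tsVIndUG Dset hdisj hRD i' (singleton_subset_iff.mpr hj')]
        by_cases hne : (R ∩ Dset i').Nonempty
        · have hjR : j' ∉ R := fun h => hcond ⟨hne, h⟩
          have hjRi : j' ∉ R ∩ Dset i' := fun h => hjR (mem_inter.mp h).1
          have hiff : R ∩ Dset i' ⊆ insert j' S ↔ R ∩ Dset i' ⊆ S := by
            rw [Finset.subset_insert_iff, erase_eq_of_notMem hjRi]
          rw [if_congr (and_congr_right fun _ => hiff) rfl rfl, sub_self]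
          rw [if_neg (show ¬((R ∩ Dset i').Nonempty ∧ R ∩ Dset i' ⊆ {j'}) from by
            rintro ⟨-, h2⟩
            obtain ⟨x, hx⟩ := hne
            exact hjRi ((mem_singleton.mp (h2 hx)) ▸ hx))]
        · rw [if_neg (fun h => hne h.1), if_neg (fun h => hne h.1),
            if_neg (fun h => hne h.1), sub_self])
      rw [h, tsVIndUG Dset hdisj hRD i' (singleton_subset_iff.mpr hj')]
      rw [if_neg]
      rintro ⟨h1, h2⟩
      obtain ⟨x, hx⟩ := h1
      exact hcond ⟨⟨x, hx⟩, (mem_singleton.mp (h2 hx)) ▸ (mem_inter.mp hx).1⟩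
    by_cases hmain : (R ∩ Dset i).Nonempty ∧ j ∈ R
    · obtain ⟨hiT, hjR⟩ := hmain
      have hiT' : i ∈ univ.filter fun i' => (R ∩ Dset i').Nonempty :=
        mem_filter.mpr ⟨mem_univ _, hiT⟩
      have hjRi : j ∈ R ∩ Dset i := mem_inter.mpr ⟨hjR, hj⟩
      -- clients outside the support have zero total value
      have hclient0 : ∀ i' : ι, ¬(R ∩ Dset i').Nonempty →
          ∑ j' ∈ Dset i', φ (uG R) i' j' = 0 := by
        intro i' hne'
        have hR0 : R ∩ Dset i' = ∅ := not_nonempty_iff_eq_empty.mp hne'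
        have hTT : (univ.filter fun i'' => (R ∩ Dset i'').Nonempty).erase i'
            = univ.filter fun i'' => (R ∩ Dset i'').Nonempty :=
          erase_eq_of_notMem (fun h => hne' (mem_filter.mp h).2)
        have hnotsub : ¬ R ⊆ Dset i' := by
          intro hsub
          obtain ⟨x, hx⟩ := nonempty_iff_ne_empty.mpr hRne
          exact hne' ⟨x, mem_inter.mpr ⟨hx, hsub hx⟩⟩
        have h := hDUMC (uG R) huGE i' (by
          intro C hiC'
          have e1 := tsF2 Dset hdisj hRD (Subset.refl (Dset i')) hiC'
          have e2 := tsF1 Dset hdisj hRD C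
          rw [hTT, hR0] at e1
          simp only [empty_subset, and_true] at e1
          have hL : uG R (C.biUnion Dset ∪ Dset i') = uG R (C.biUnion Dset) := by
            simp only [uG]
            exact if_congr (e1.trans e2.symm) rfl rfl
          rw [hL, sub_self]
          simp only [uG]
          rw [if_neg hnotsub])
        rw [h]
        simp only [uG]
        rw [if_neg hnotsub]
      -- clients inside the support all have the same total value
      have hclientEq : ∀ i' ∈ univ.filter fun i'' => (R ∩ Dset i'').Nonempty,
          ∑ j' ∈ Dset i', φ (uG R) i' j' = ∑ j' ∈ Dset i, φ (uG R) i j' := by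
        intro i' hi'T
        by_cases hii : i' = i
        · subst hii; rfl
        · apply hSYMC (uG R) huGE i' i
          intro C hi'C hiC'
          simp only [uG]
          have e1 := tsF2 Dset hdisj hRD (Subset.refl (Dset i')) hi'C
          have e2 := tsF2 Dset hdisj hRD (Subset.refl (Dset i)) hiC'
          rw [if_neg (show ¬ R ⊆ C.biUnion Dset ∪ Dset i' from fun h =>
            hiC' ((e1.mp h).1 (mem_erase.mpr ⟨fun he => hii he.symm, hiT'⟩)))]
          rw [if_neg (show ¬ R ⊆ C.biUnion Dset ∪ Dset i from fun h =>
            hi'C ((e2.mp h).1 (mem_erase.mpr ⟨hii, hi'T⟩)))]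
      -- efficiency
      have heff := hEFF (uG R) huGE
      have huGD : uG R D = 1 := by
        simp only [uG]
        rw [if_pos hRDD]
      rw [huGD] at heff
      have hsplit := Finset.sum_filter_add_sum_filter_not univ
        (fun i' => (R ∩ Dset i').Nonempty) (fun i' => ∑ j' ∈ Dset i', φ (uG R) i' j')
      have hnotpart : ∑ i' ∈ univ.filter (fun i' => ¬(R ∩ Dset i').Nonempty),
          (∑ j' ∈ Dset i', φ (uG R) i' j') = 0 :=
        sum_eq_zero fun i' hi' => hclient0 i' (mem_filter.mp hi').2
      have hTpart : ∑ i' ∈ univ.filter (fun i' => (R ∩ Dset i').Nonempty),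
          (∑ j' ∈ Dset i', φ (uG R) i' j')
            = ((univ.filter fun i' => (R ∩ Dset i').Nonempty).card : ℝ)
              * ∑ j' ∈ Dset i, φ (uG R) i j' := by
        rw [sum_congr rfl hclientEq, sum_const, nsmul_eq_mul]
      have hglobal : ((univ.filter fun i' => (R ∩ Dset i').Nonempty).card : ℝ)
          * (∑ j' ∈ Dset i, φ (uG R) i j') = 1 := by
        rw [← hTpart]
        rw [hnotpart, add_zero] at hsplit
        rw [hsplit, heff]
      -- inner-block symmetry
      have hsymB : ∀ j' ∈ (Dset i).filter (fun j'' => j'' ∈ R),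
          φ (uG R) i j' = φ (uG R) i j := by
        intro j' hj'
        obtain ⟨hj'D, hj'R⟩ := mem_filter.mp hj'
        by_cases hjj : j' = j
        · rw [hjj]
        · apply hSYMIB (uG R) huGE i j' hj'D j hj
          intro S hSs
          have hs2 : S ⊆ (Dset i).erase j' := hSs.trans (erase_subset _ _)
          have hs1 : S ⊆ Dset i := hs2.trans (erase_subset _ _)
          have hjS : j ∉ S := fun h => (mem_erase.mp (hSs h)).1 rfl
          have hj'S : j' ∉ S := fun h => (mem_erase.mp (hs2 h)).1 rfl
          rw [tsVIndUG Dset hdisj hRD i (insert_subset hj'D hs1),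
              tsVIndUG Dset hdisj hRD i (insert_subset hj hs1)]
          rw [if_neg (show ¬((R ∩ Dset i).Nonempty ∧ R ∩ Dset i ⊆ insert j' S) from by
            rintro ⟨-, h2⟩
            rcases mem_insert.mp (h2 hjRi) with h | h
            · exact hjj h.symm
            · exact hjS h)]
          rw [if_neg (show ¬((R ∩ Dset i).Nonempty ∧ R ∩ Dset i ⊆ insert j S) from by
            rintro ⟨-, h2⟩
            rcases mem_insert.mp (h2 (mem_inter.mpr ⟨hj'R, hj'D⟩)) with h | h
            · exact hjj h
            · exact hj'S h)]
      have hblocksplit := Finset.sum_filter_add_sum_filter_not (Dset i)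
        (fun j' => j' ∈ R) (fun j' => φ (uG R) i j')
      have hnotR : ∑ j' ∈ (Dset i).filter (fun j' => ¬ j' ∈ R), φ (uG R) i j' = 0 :=
        sum_eq_zero fun j' hj' => hzero i j' (mem_filter.mp hj').1
          (fun hcnd => (mem_filter.mp hj').2 hcnd.2)
      have hRfilter : (Dset i).filter (fun j' => j' ∈ R) = R ∩ Dset i := by
        ext x
        simp only [mem_filter, mem_inter]
        exact ⟨fun h => ⟨h.2, h.1⟩, fun h => ⟨h.2, h.1⟩⟩
      have hblock : ∑ j' ∈ Dset i, φ (uG R) i j'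
          = ((R ∩ Dset i).card : ℝ) * φ (uG R) i j := by
        rw [← hblocksplit, hnotR, add_zero, sum_congr rfl hsymB, sum_const, nsmul_eq_mul,
          hRfilter]
      rw [hblock] at hglobal
      rw [tsTsvUG Dset hdisj hRD i hj, if_pos (⟨hiT, hjR⟩ :
        (R ∩ Dset i).Nonempty ∧ j ∈ R)]
      have htne : ((univ.filter fun i' => (R ∩ Dset i').Nonempty).card : ℝ) ≠ 0 := by
        have := card_pos.mpr hTne
        exact Nat.cast_ne_zero.mpr this.ne'
      have hrne : ((R ∩ Dset i).card : ℝ) ≠ 0 := by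
        have := card_pos.mpr hiT
        exact Nat.cast_ne_zero.mpr this.ne'
      field_simp
      linear_combination hglobal
    · rw [hzero i j hj hmain, tsTsvUG Dset hdisj hRD i hj, if_neg hmain]
  -- assemble everything by linearity
  have hφlin : φ (∑ R ∈ 𝒮, c R • uG R) i j = ∑ R ∈ 𝒮, c R * φ (uG R) i j :=
    tsLinSum (fun u => φ u i j)
      (fun a b v₁ v₂ h1 h2 => hLIN i j hj a b v₁ v₂ h1 h2) 𝒮 c uG huG0
  have htlin : tsvBlock Dset (∑ R ∈ 𝒮, c R • uG R) i j
      = ∑ R ∈ 𝒮, c R * tsvBlock Dset (uG R) i j :=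
    tsLinSum (fun u => tsvBlock Dset u i j)
      (fun a b v₁ v₂ _ _ => tsTsvComb Dset a b v₁ v₂ i j) 𝒮 c uG huG0
  have hsum_eq : ∑ R ∈ 𝒮, c R * φ (uG R) i j = ∑ R ∈ 𝒮, c R * tsvBlock Dset (uG R) i j :=
    sum_congr rfl (fun R hR => by rw [key R hR])
  have hφadd : φ v i j = φ vD i j + φ vrest i j := by
    have h := hLIN i j hj 1 1 vD vrest hvDE hvrestE
    rw [one_smul, one_smul, one_mul, one_mul, ← hveq] at h
    exact h
  have htadd : tsvBlock Dset v i j = tsvBlock Dset vD i j + tsvBlock Dset vrest i j := by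
    have h := tsTsvComb Dset 1 1 vD vrest i j
    rw [one_smul, one_smul, one_mul, one_mul, ← hveq] at h
    exact h
  rw [hφadd, hφrest, add_zero, htadd, htsvrest, add_zero, hvDdef, hφlin, htlin, hsum_eq]
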